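/- arXiv:2307.05875 — 3 statements merged into one kernel-verified Lean document; each statement's English description precedes it below -/
import Mathlib

section
/- If f : [a,b] → ℝ is a convex function on a nontrivial interval [a,b] (a < b), then (1/(b-a)) ∫_a^b f(x) dx ≤ (f(a) + f(b))/2. -/
open MeasureTheory intervalIntegral

/-- Hermite–Hadamard, right-hand side: the average of a convex function on `[a,b]`
is at most the average of its boundary values. -/
theorem hermite_hadamard_right (a b : ℝ) (hab : a < b) (f : ℝ → ℝ)
    (hf : ConvexOn ℝ (Set.Icc a b) f)
    (hint : IntervalIntegrable f volume a b) :
    (1 / (b - a)) * ∫ x in a..b, f x ≤ (f a + f b) / 2 := by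
  have hba : (0:ℝ) < b - a := by linarith
  set g : ℝ → ℝ := fun x => ((b - x) * f a + (x - a) * f b) / (b - a) with hg
  have hgint : IntervalIntegrable g volume a b := by
    apply IntervalIntegrable.div_const
    exact ((intervalIntegrable_const.sub intervalIntegrable_id).mul_const _).add
      ((intervalIntegrable_id.sub intervalIntegrable_const).mul_const _)
  have hmono : ∀ x ∈ Set.Icc a b, f x ≤ g x := by
    intro x hx
    obtain ⟨hax, hxb⟩ := hx
    have h1 : (0:ℝ) ≤ (b - x) / (b - a) := div_nonneg (by linarith) hba.le
    have h2 : (0:ℝ) ≤ (x - a) / (b - a) := div_nonneg (by linarith) hba.le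
    have h3 : (b - x) / (b - a) + (x - a) / (b - a) = 1 := by field_simp; ring
    have := hf.2 (Set.left_mem_Icc.2 hab.le) (Set.right_mem_Icc.2 hab.le) h1 h2 h3
    have hx' : ((b - x) / (b - a)) • a + ((x - a) / (b - a)) • b = x := by
      simp only [smul_eq_mul]; field_simp; ring
    rw [hx'] at this
    calc f x ≤ (b - x) / (b - a) * f a + (x - a) / (b - a) * f b := this
      _ = g x := by rw [hg]; ring
  have hle : (∫ x in a..b, f x) ≤ ∫ x in a..b, g x :=
    intervalIntegral.integral_mono_on hab.le hint hgint hmono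
  have hgval : (∫ x in a..b, g x) = (b - a) * (f a + f b) / 2 := by
    rw [hg]
    simp only [intervalIntegral.integral_div]
    rw [intervalIntegral.integral_add
        (((intervalIntegrable_const.sub intervalIntegrable_id).mul_const _))
        (((intervalIntegrable_id.sub intervalIntegrable_const).mul_const _))]
    have h1 : (∫ x in a..b, (b - x) * f a) = (∫ x in a..b, (b - x)) * f a :=
      intervalIntegral.integral_mul_const _ _
    have h2 : (∫ x in a..b, (x - a) * f b) = (∫ x in a..b, (x - a)) * f b :=
      intervalIntegral.integral_mul_const _ _
    have h3 : (∫ x in a..b, (b - x)) = (b - a)^2 / 2 := by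
      rw [intervalIntegral.integral_sub intervalIntegrable_const intervalIntegrable_id]
      simp [integral_id]
      ring
    have h4 : (∫ x in a..b, (x - a)) = (b - a)^2 / 2 := by
      rw [intervalIntegral.integral_sub intervalIntegrable_id intervalIntegrable_const]
      simp [integral_id]
      ring
    rw [h1, h2, h3, h4]
    field_simp
  rw [hgval] at hle
  rw [div_mul_eq_mul_div, one_mul, div_le_iff₀ hba] at *
  linarith [hle]
end

section
/- If f : [a,b] → ℝ is convex and continuous on [a,b] with a < b, and (1/(b-a)) ∫_a^b f(x) dx = (f(a)+f(b))/2, then f is affine-linear on [a,b], i.e., there exist c, m ∈ ℝ with f(x) = m x + c for all x ∈ [a,b]. -/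
open MeasureTheory intervalIntegral

/-- Equality case of the one-dimensional Hermite–Hadamard inequality for the
boundary average: if equality holds, `f` is affine-linear on `[a,b]`. -/
theorem hermite_hadamard_right_eq_iff_affine (a b : ℝ) (hab : a < b) (f : ℝ → ℝ)
    (hf : ConvexOn ℝ (Set.Icc a b) f) (hcont : ContinuousOn f (Set.Icc a b))
    (heq : (1 / (b - a)) * ∫ x in a..b, f x = (f a + f b) / 2) :
    ∃ m c : ℝ, ∀ x ∈ Set.Icc a b, f x = m * x + c := by
  have hba : (0:ℝ) < b - a := by linarith
  set m : ℝ := (f b - f a) / (b - a) with hm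
  set c : ℝ := f a - m * a with hc
  refine ⟨m, c, ?_⟩
  set g : ℝ → ℝ := fun x => m * x + c with hg
  -- f ≤ g on Icc by convexity
  have hle : ∀ x ∈ Set.Icc a b, f x ≤ g x := by
    intro x hx
    set t : ℝ := (x - a) / (b - a) with ht
    have ht0 : 0 ≤ t := div_nonneg (by linarith [hx.1]) hba.le
    have ht1 : t ≤ 1 := by
      rw [ht, div_le_one hba]; linarith [hx.2]
    have hx' : (1 - t) • a + t • b = x := by
      have key : t * (b - a) = x - a := by rw [ht]; exact div_mul_cancel₀ _ hba.ne'
      simp only [smul_eq_mul]; linear_combination key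
    have := hf.2 (Set.left_mem_Icc.2 hab.le) (Set.right_mem_Icc.2 hab.le)
      (by linarith : (0:ℝ) ≤ 1 - t) ht0 (by ring)
    rw [hx'] at this
    have hgx : g x = (1 - t) * f a + t * f b := by
      simp only [hg, hc, hm, ht]
      field_simp
      ring
    rw [hgx]; simpa using this
  -- integrability
  have hfi : IntervalIntegrable f volume a b := by
    apply ContinuousOn.intervalIntegrable
    rwa [Set.uIcc_of_le hab.le]
  have hgi : IntervalIntegrable g volume a b :=
    (Continuous.intervalIntegrable (by continuity) a b)
  -- integral of g
  have hgint : ∫ x in a..b, g x = (f a + f b) / 2 * (b - a) := by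
    have : ∫ x in a..b, g x = m * ((b ^ 2 - a ^ 2) / 2) + c * (b - a) := by
      simp only [hg]
      rw [intervalIntegral.integral_add (Continuous.intervalIntegrable (by continuity) a b) (intervalIntegrable_const),
        intervalIntegral.integral_const_mul, integral_id, intervalIntegral.integral_const]
      simp [mul_comm, sub_mul]
    rw [this, hm, hc, hm]
    field_simp
    ring
  have hfint : ∫ x in a..b, f x = (f a + f b) / 2 * (b - a) := by
    have := heq
    field_simp at this
    linarith [this]
  -- integral of g - f is zero, g - f nonneg → ae equal
  have hsub : ∫ x in a..b, (g x - f x) = 0 := by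
    rw [intervalIntegral.integral_sub hgi hfi, hgint, hfint, sub_self]
  have hae : (fun x => g x - f x) =ᵐ[volume.restrict (Set.Ioc a b)] 0 := by
    rw [← intervalIntegral.integral_eq_zero_iff_of_le_of_nonneg_ae hab.le ?_ (hgi.sub hfi)]
    · exact hsub
    · refine (ae_restrict_iff' measurableSet_Ioc).2 (Filter.Eventually.of_forall ?_)
      intro x hx
      have := hle x ⟨hx.1.le, hx.2⟩
      simpa using this
  have hae' : f =ᵐ[volume.restrict (Set.Icc a b)] g := by
    have hIcc : volume.restrict (Set.Icc a b) = volume.restrict (Set.Ioc a b) := by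
      exact Measure.restrict_congr_set Ioc_ae_eq_Icc.symm
    rw [hIcc]
    filter_upwards [hae] with x hx
    have : g x - f x = 0 := hx
    linarith
  have hgcont : ContinuousOn g (Set.Icc a b) := (by continuity : Continuous g).continuousOn
  have heqOn : Set.EqOn f g (Set.Icc a b) := by
    apply Measure.eqOn_of_ae_eq hae' hcont hgcont
    rw [interior_Icc, closure_Ioo hab.ne]
  exact fun x hx => heqOn hx
end

section
/- Let Ω = [a₁,b₁] × ⋯ × [a_d,b_d] ⊆ ℝ^d (d ≥ 2) be a box with aᵢ < bᵢ for all i. Then for every convex function f : Ω → ℝ, (1/|Ω|)∫_Ω f dV ≤ (1/|∂Ω|)∫_{∂Ω} f dσ. -/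
open MeasureTheory Set
open scoped ENNReal NNReal

noncomputable section
namespace JensenBox
variable {n : ℕ}

def φm (i : Fin (n+1)) (c : ℝ) (y : EuclideanSpace ℝ (Fin n)) : EuclideanSpace ℝ (Fin (n+1)) :=
  WithLp.toLp 2 (Fin.insertNth (α := fun _ => ℝ) i c y.ofLp)

lemma φm_isometry (i : Fin (n+1)) (c : ℝ) : Isometry (φm i c) := by
  intro y z
  simp only [EuclideanSpace.edist_eq, φm, PiLp.toLp_apply]
  congr 1
  rw [Fin.sum_univ_succAbove (fun j => (edist ((Fin.insertNth (α := fun _ => ℝ) i c y.ofLp) j) ((Fin.insertNth (α := fun _ => ℝ) i c z.ofLp) j)) ^ 2) i]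
  simp [Fin.insertNth_apply_same, Fin.insertNth_apply_succAbove]

lemma φm_me (i : Fin (n+1)) (c : ℝ) : MeasurableEmbedding (φm i c) :=
  ((φm_isometry i c).isClosedEmbedding).measurableEmbedding

instance isAddHaar_nu : (μH[(n:ℝ)] : Measure (EuclideanSpace ℝ (Fin n))).IsAddHaarMeasure := by
  have := MeasureTheory.isAddHaarMeasure_hausdorffMeasure (E := EuclideanSpace ℝ (Fin n))
  rwa [finrank_euclideanSpace_fin] at this

lemma nu_eq_smul :
    (μH[(n:ℝ)] : Measure (EuclideanSpace ℝ (Fin n))) =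
      (Measure.addHaarScalarFactor (μH[(n:ℝ)]) (volume : Measure (EuclideanSpace ℝ (Fin n))) : ℝ≥0∞) •
        (volume : Measure (EuclideanSpace ℝ (Fin n))) := by
  exact Measure.isAddLeftInvariant_eq_smul _ _

lemma scalar_pos :
    0 < Measure.addHaarScalarFactor (μH[(n:ℝ)]) (volume : Measure (EuclideanSpace ℝ (Fin n))) := by
  exact Measure.addHaarScalarFactor_pos_of_isAddHaarMeasure _ _

lemma restrict_face (i : Fin (n+1)) (c : ℝ) (B : Set (EuclideanSpace ℝ (Fin n)))
    (hB : MeasurableSet B) :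
    (μH[(n:ℝ)] : Measure (EuclideanSpace ℝ (Fin (n+1)))).restrict (φm i c '' B) =
      Measure.map (φm i c) ((μH[(n:ℝ)] : Measure (EuclideanSpace ℝ (Fin n))).restrict B) := by
  ext s hs
  rw [Measure.restrict_apply hs, Measure.map_apply (φm_me i c).measurable hs,
    Measure.restrict_apply ((φm_me i c).measurable hs)]
  have himg : φm i c '' (φm i c ⁻¹' s ∩ B) = s ∩ φm i c '' B := by
    rw [Set.image_inter (φm_me i c).injective, Set.image_preimage_eq_inter_range, inter_assoc,
      inter_eq_self_of_subset_right (image_subset_range _ _)]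
  rw [← himg, (φm_isometry i c).hausdorffMeasure_image (Or.inl (Nat.cast_nonneg n))]

def Ωset (a b : Fin (n+1) → ℝ) : Set (EuclideanSpace ℝ (Fin (n+1))) :=
  {x | ∀ j, x j ∈ Set.Icc (a j) (b j)}

def Bset (a b : Fin (n+1) → ℝ) (i : Fin (n+1)) : Set (EuclideanSpace ℝ (Fin n)) :=
  {y | ∀ k, y k ∈ Set.Icc (a (i.succAbove k)) (b (i.succAbove k))}

lemma isClosed_B (a b : Fin (n+1) → ℝ) (i : Fin (n+1)) : IsClosed (Bset a b i) := by
  have : Bset a b i = ⋂ k, (fun y : EuclideanSpace ℝ (Fin n) => y k) ⁻¹'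
      Set.Icc (a (i.succAbove k)) (b (i.succAbove k)) := by
    ext y; simp [Bset]
  rw [this]
  exact isClosed_iInter fun k => isClosed_Icc.preimage (PiLp.continuous_apply 2 _ k)

lemma measurable_B (a b : Fin (n+1) → ℝ) (i : Fin (n+1)) : MeasurableSet (Bset a b i) :=
  (isClosed_B a b i).measurableSet

/-- volume of the (n)-dimensional box -/
lemma volume_B (a b : Fin (n+1) → ℝ) (i : Fin (n+1)) :
    volume (Bset a b i) = ∏ k, ENNReal.ofReal (b (i.succAbove k) - a (i.succAbove k)) := by
  have hs : Bset a b i = (MeasurableEquiv.toLp 2 (Fin n → ℝ)).symm ⁻¹'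
      (Set.univ.pi fun k => Set.Icc (a (i.succAbove k)) (b (i.succAbove k))) := by
    ext y
    simp only [Bset, Set.mem_setOf_eq, Set.mem_preimage, Set.mem_pi, Set.mem_univ, true_implies]
    exact Iff.rfl
  rw [hs, (EuclideanSpace.volume_preserving_symm_measurableEquiv_toLp (Fin n)).measure_preimage
    ((MeasurableSet.univ_pi fun k => measurableSet_Icc).nullMeasurableSet),
    volume_pi_pi]
  simp [Real.volume_Icc]

lemma volume_Ω (a b : Fin (n+1) → ℝ) :
    volume (Ωset a b) = ∏ j, ENNReal.ofReal (b j - a j) := by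
  have hs : Ωset a b = (MeasurableEquiv.toLp 2 (Fin (n+1) → ℝ)).symm ⁻¹'
      (Set.univ.pi fun j => Set.Icc (a j) (b j)) := by
    ext x
    simp only [Ωset, Set.mem_setOf_eq, Set.mem_preimage, Set.mem_pi, Set.mem_univ, true_implies]
    exact Iff.rfl
  rw [hs, (EuclideanSpace.volume_preserving_symm_measurableEquiv_toLp (Fin (n+1))).measure_preimage
    ((MeasurableSet.univ_pi fun k => measurableSet_Icc).nullMeasurableSet),
    volume_pi_pi]
  simp [Real.volume_Icc]

lemma face_measure (a b : Fin (n+1) → ℝ) (i : Fin (n+1)) (c : ℝ) :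
    (μH[(n:ℝ)] : Measure (EuclideanSpace ℝ (Fin (n+1)))) (φm i c '' Bset a b i) =
      (Measure.addHaarScalarFactor (μH[(n:ℝ)])
        (volume : Measure (EuclideanSpace ℝ (Fin n))) : ℝ≥0∞) * volume (Bset a b i) := by
  rw [(φm_isometry i c).hausdorffMeasure_image (Or.inl (Nat.cast_nonneg n))]
  conv_lhs => rw [nu_eq_smul]
  simp [Measure.smul_apply]

lemma face_integral (a b : Fin (n+1) → ℝ) (i : Fin (n+1)) (c : ℝ)
    (f : EuclideanSpace ℝ (Fin (n+1)) → ℝ) :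
    ∫ x in φm i c '' Bset a b i, f x ∂(μH[(n:ℝ)]) =
      (Measure.addHaarScalarFactor (μH[(n:ℝ)])
        (volume : Measure (EuclideanSpace ℝ (Fin n))) : ℝ≥0).toReal *
        ∫ y in Bset a b i, f (φm i c y) := by
  rw [restrict_face i c _ (measurable_B a b i), (φm_me i c).integral_map]
  conv_lhs => rw [nu_eq_smul]
  rw [Measure.restrict_smul, integral_smul_measure]
  simp

lemma face_integrable (a b : Fin (n+1) → ℝ) (i : Fin (n+1)) (c : ℝ)
    {f : EuclideanSpace ℝ (Fin (n+1)) → ℝ}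
    (hf : IntegrableOn f (φm i c '' Bset a b i) (μH[(n:ℝ)])) :
    IntegrableOn (fun y => f (φm i c y)) (Bset a b i) volume := by
  unfold IntegrableOn at hf ⊢
  rw [restrict_face i c _ (measurable_B a b i), (φm_me i c).integrable_map_iff, nu_eq_smul,
    Measure.restrict_smul] at hf
  have hcne : (Measure.addHaarScalarFactor (μH[(n:ℝ)])
      (volume : Measure (EuclideanSpace ℝ (Fin n))) : ℝ≥0∞) ≠ 0 := by
    simpa using (scalar_pos (n := n)).ne'
  exact (integrable_smul_measure hcne ENNReal.coe_ne_top).1 hf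

lemma mem_Ω_iff (a b : Fin (n+1) → ℝ) (i : Fin (n+1)) (t : ℝ) (y : EuclideanSpace ℝ (Fin n)) :
    φm i t y ∈ Ωset a b ↔ t ∈ Set.Icc (a i) (b i) ∧ y ∈ Bset a b i := by
  simp only [Ωset, Bset, mem_setOf_eq, φm]
  rw [Fin.forall_iff_succAbove i]
  simp [Fin.insertNth_apply_same, Fin.insertNth_apply_succAbove]

lemma mem_image_φm {a b : Fin (n+1) → ℝ} {i : Fin (n+1)} {c : ℝ} (hc : c ∈ Set.Icc (a i) (b i))
    {x : EuclideanSpace ℝ (Fin (n+1))} :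
    x ∈ φm i c '' Bset a b i ↔ x ∈ Ωset a b ∧ x i = c := by
  constructor
  · rintro ⟨y, hy, rfl⟩
    refine ⟨(mem_Ω_iff a b i c y).2 ⟨hc, hy⟩, ?_⟩
    simp [φm, Fin.insertNth_apply_same]
  · rintro ⟨hx, hxi⟩
    refine ⟨WithLp.toLp 2 (i.removeNth x), fun k => hx (i.succAbove k), ?_⟩
    simp only [φm, ← hxi]
    exact congrArg (WithLp.toLp 2) (Fin.insertNth_self_removeNth (α := fun _ => ℝ) i x)

lemma isClosed_Ω (a b : Fin (n+1) → ℝ) : IsClosed (Ωset a b) := by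
  have : Ωset a b = ⋂ j, (fun x : EuclideanSpace ℝ (Fin (n+1)) => x j) ⁻¹' Set.Icc (a j) (b j) := by
    ext x; simp [Ωset]
  rw [this]
  exact isClosed_iInter fun j => isClosed_Icc.preimage (PiLp.continuous_apply 2 _ j)

lemma interior_Ω (a b : Fin (n+1) → ℝ) :
    interior (Ωset a b) = {x | ∀ j, x j ∈ Set.Ioo (a j) (b j)} := by
  apply Subset.antisymm
  · intro x hx
    obtain ⟨ε, hε, hball⟩ := Metric.isOpen_iff.1 isOpen_interior x hx
    have hballΩ : Metric.ball x ε ⊆ Ωset a b := hball.trans interior_subset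
    intro j
    have hmem : ∀ (s : ℝ), |s| < ε → x + s • EuclideanSpace.single j (1:ℝ) ∈ Ωset a b := by
      intro s hs
      apply hballΩ
      simp only [Metric.mem_ball, dist_eq_norm, add_sub_cancel_left]
      rwa [norm_smul, EuclideanSpace.norm_single, norm_one, mul_one]
    have h1 := (hmem (-(ε/2)) (by rw [abs_neg, abs_of_pos (by linarith)]; linarith)) j
    have h2 := (hmem (ε/2) (by rw [abs_of_pos (by linarith)]; linarith)) j
    simp only [Ωset, mem_setOf_eq, PiLp.add_apply, PiLp.smul_apply,
      EuclideanSpace.single_apply, if_pos rfl, if_true, smul_eq_mul, mul_one, mem_Icc] at h1 h2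
    constructor <;> [linarith [h1.1]; linarith [h2.2]]
  · intro x hx
    apply mem_interior.2
    refine ⟨{y | ∀ j, y j ∈ Set.Ioo (a j) (b j)}, ?_, ?_, hx⟩
    · intro y hy j; exact Ioo_subset_Icc_self (hy j)
    · have : {y : EuclideanSpace ℝ (Fin (n+1)) | ∀ j, y j ∈ Set.Ioo (a j) (b j)} =
          ⋂ j, (fun y : EuclideanSpace ℝ (Fin (n+1)) => y j) ⁻¹' Set.Ioo (a j) (b j) := by
        ext y; simp
      rw [this]
      exact isOpen_iInter_of_finite fun j => isOpen_Ioo.preimage (PiLp.continuous_apply 2 _ j)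

lemma frontier_Ω (a b : Fin (n+1) → ℝ) (hab : ∀ j, a j < b j) :
    frontier (Ωset a b) = ⋃ i, (φm i (a i) '' Bset a b i ∪ φm i (b i) '' Bset a b i) := by
  rw [(isClosed_Ω a b).frontier_eq, interior_Ω]
  ext x
  simp only [mem_diff, mem_iUnion, mem_union,
    mem_image_φm (Set.left_mem_Icc.2 (hab _).le), mem_image_φm (Set.right_mem_Icc.2 (hab _).le),
    mem_setOf_eq]
  constructor
  · rintro ⟨hx, hnot⟩
    push_neg at hnot
    obtain ⟨j, hj⟩ := hnot
    rcases (hx j) with ⟨hj1, hj2⟩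
    rcases lt_or_eq_of_le hj1 with h | h
    · rcases lt_or_eq_of_le hj2 with h' | h'
      · exact absurd ⟨h, h'⟩ hj
      · exact ⟨j, Or.inr ⟨hx, h'⟩⟩
    · exact ⟨j, Or.inl ⟨hx, h.symm⟩⟩
  · rintro ⟨j, hj | hj⟩
    · refine ⟨hj.1, fun hall => ?_⟩
      have := (hall j).1
      rw [hj.2] at this
      exact lt_irrefl _ this
    · refine ⟨hj.1, fun hall => ?_⟩
      have := (hall j).2
      rw [hj.2] at this
      exact lt_irrefl _ this

def ψe (i : Fin (n+1)) : (ℝ × EuclideanSpace ℝ (Fin n)) ≃ᵐ EuclideanSpace ℝ (Fin (n+1)) :=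
  ((MeasurableEquiv.refl ℝ).prodCongr (MeasurableEquiv.toLp 2 (Fin n → ℝ)).symm).trans
    ((MeasurableEquiv.piFinSuccAbove (fun _ => ℝ) i).symm.trans
      (MeasurableEquiv.toLp 2 (Fin (n+1) → ℝ)).symm.symm)

example (i : Fin (n+1)) (t : ℝ) (y : EuclideanSpace ℝ (Fin n)) : ψe i (t, y) = φm i t y := rfl

lemma ψe_mp (i : Fin (n+1)) :
    MeasurePreserving (ψe i) (volume.prod volume) volume := by
  refine MeasurePreserving.trans ?_ (((volume_preserving_piFinSuccAbove (fun _ : Fin (n+1) => ℝ) i).symm _).trans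
    ((EuclideanSpace.volume_preserving_symm_measurableEquiv_toLp (Fin (n+1))).symm))
  exact (MeasurePreserving.id volume).prod (EuclideanSpace.volume_preserving_symm_measurableEquiv_toLp (Fin n))

lemma hh1 {g : ℝ → ℝ} {p q : ℝ} (hpq : p < q) (hg : ConvexOn ℝ (Set.Icc p q) g)
    (hint : IntegrableOn g (Set.Icc p q)) :
    ∫ t in Set.Icc p q, g t ≤ (q - p) * (g p + g q) / 2 := by
  have hqp : (0:ℝ) < q - p := by linarith
  set h : ℝ → ℝ := fun t => ((q - t) * g p + (t - p) * g q) / (q - p) with hh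
  have key : ∀ t ∈ Set.Icc p q, g t ≤ h t := by
    intro t ht
    obtain ⟨h1, h2⟩ := ht
    have hα : (0:ℝ) ≤ (q - t) / (q - p) := div_nonneg (by linarith) hqp.le
    have hβ : (0:ℝ) ≤ (t - p) / (q - p) := div_nonneg (by linarith) hqp.le
    have hαβ : (q - t) / (q - p) + (t - p) / (q - p) = 1 := by field_simp; ring
    have hcvx := hg.2 (Set.left_mem_Icc.2 hpq.le) (Set.right_mem_Icc.2 hpq.le) hα hβ hαβ
    have ht' : ((q - t) / (q - p)) • p + ((t - p) / (q - p)) • q = t := by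
      rw [smul_eq_mul, smul_eq_mul, div_mul_eq_mul_div, div_mul_eq_mul_div, ← add_div,
        show (q - t) * p + (t - p) * q = t * (q - p) by ring, mul_div_assoc, div_self hqp.ne',
        mul_one]
    rw [ht'] at hcvx
    refine hcvx.trans (le_of_eq ?_)
    simp only [smul_eq_mul, hh]
    field_simp
  have hcont : Continuous h := by fun_prop
  have hhint : IntegrableOn h (Set.Icc p q) := hcont.integrableOn_Icc
  have mono := setIntegral_mono_on hint hhint measurableSet_Icc key
  refine mono.trans (le_of_eq ?_)
  rw [MeasureTheory.integral_Icc_eq_integral_Ioc, ← intervalIntegral.integral_of_le hpq.le]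
  have hrw : ∀ t, h t = (g p / (q - p)) * (q - t) + (g q / (q - p)) * (t - p) := by
    intro t; simp only [hh]; ring
  simp_rw [hrw]
  rw [intervalIntegral.integral_add ((by fun_prop : Continuous fun t : ℝ => (g p / (q - p)) * (q - t)).intervalIntegrable _ _)
    ((by fun_prop : Continuous fun t : ℝ => (g q / (q - p)) * (t - p)).intervalIntegrable _ _),
    intervalIntegral.integral_const_mul, intervalIntegral.integral_const_mul]
  have e1 : ∫ t in p..q, (q - t) = (q - p)^2 / 2 := by
    rw [intervalIntegral.integral_sub ((by fun_prop : Continuous fun _ : ℝ => q).intervalIntegrable _ _)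
      ((by fun_prop : Continuous fun t : ℝ => t).intervalIntegrable _ _),
      integral_id, intervalIntegral.integral_const]
    simp only [smul_eq_mul]; ring
  have e2 : ∫ t in p..q, (t - p) = (q - p)^2 / 2 := by
    rw [intervalIntegral.integral_sub ((by fun_prop : Continuous fun t : ℝ => t).intervalIntegrable _ _)
      ((by fun_prop : Continuous fun _ : ℝ => p).intervalIntegrable _ _),
      integral_id, intervalIntegral.integral_const]
    simp only [smul_eq_mul]; ring
  rw [e1, e2]
  field_simp

lemma φm_affine (i : Fin (n+1)) (y : EuclideanSpace ℝ (Fin n)) {α β : ℝ} (hαβ : α + β = 1)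
    (t1 t2 : ℝ) : φm i (α * t1 + β * t2) y = α • φm i t1 y + β • φm i t2 y := by
  ext j
  refine Fin.succAboveCases i ?_ ?_ j
  · simp [φm, PiLp.toLp_apply, Fin.insertNth_apply_same, PiLp.add_apply, PiLp.smul_apply, smul_eq_mul]
  · intro k
    simp only [φm, PiLp.toLp_apply, Fin.insertNth_apply_succAbove, PiLp.add_apply, PiLp.smul_apply, smul_eq_mul]
    rw [← add_mul, hαβ, one_mul]

lemma key_ineq (a b : Fin (n+1) → ℝ) (hab : ∀ j, a j < b j) (i : Fin (n+1))
    (f : EuclideanSpace ℝ (Fin (n+1)) → ℝ) (hf : ConvexOn ℝ (Ωset a b) f)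
    (hfint : IntegrableOn f (Ωset a b) volume)
    (ha : IntegrableOn (fun y => f (φm i (a i) y)) (Bset a b i) volume)
    (hb : IntegrableOn (fun y => f (φm i (b i) y)) (Bset a b i) volume) :
    ∫ x in Ωset a b, f x ≤ (b i - a i) * (((∫ y in Bset a b i, f (φm i (a i) y)) +
      ∫ y in Bset a b i, f (φm i (b i) y))) / 2 := by
  have hpre : (ψe i) ⁻¹' (Ωset a b) = Set.Icc (a i) (b i) ×ˢ Bset a b i := by
    ext ⟨t, y⟩
    exact mem_Ω_iff a b i t y
  have step1 : ∫ x in Ωset a b, f x =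
      ∫ p in Set.Icc (a i) (b i) ×ˢ Bset a b i, f (ψe i p) ∂(volume.prod volume) := by
    rw [← (ψe_mp i).setIntegral_preimage_emb (ψe i).measurableEmbedding f (Ωset a b), hpre]
  have hI : Integrable (fun p : ℝ × EuclideanSpace ℝ (Fin n) => f (ψe i p))
      ((volume.restrict (Set.Icc (a i) (b i))).prod (volume.restrict (Bset a b i))) := by
    have := (((ψe_mp i).restrict_preimage ((isClosed_Ω a b).measurableSet)).integrable_comp_emb
      (ψe i).measurableEmbedding).2 hfint
    rwa [hpre, ← Measure.prod_restrict] at this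
  rw [step1, ← Measure.prod_restrict, integral_prod_symm _ hI]
  have hbd : ∀ᵐ y ∂(volume.restrict (Bset a b i)),
      (∫ t in Set.Icc (a i) (b i), f (φm i t y)) ≤
        (b i - a i) * (f (φm i (a i) y) + f (φm i (b i) y)) / 2 := by
    filter_upwards [hI.prod_left_ae, ae_restrict_mem (measurable_B a b i)] with y hyint hyB
    have hgcvx : ConvexOn ℝ (Set.Icc (a i) (b i)) (fun t => f (φm i t y)) := by
      refine ⟨convex_Icc _ _, fun t1 ht1 t2 ht2 α β hα hβ hαβ => ?_⟩
      have m1 : φm i t1 y ∈ Ωset a b := (mem_Ω_iff a b i t1 y).2 ⟨ht1, hyB⟩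
      have m2 : φm i t2 y ∈ Ωset a b := (mem_Ω_iff a b i t2 y).2 ⟨ht2, hyB⟩
      have := hf.2 m1 m2 hα hβ hαβ
      rw [← φm_affine i y hαβ t1 t2] at this
      simpa using this
    exact hh1 (hab i) hgcvx hyint
  have hIl : Integrable (fun y => ∫ t in Set.Icc (a i) (b i), f (φm i t y))
      (volume.restrict (Bset a b i)) := hI.integral_prod_right
  have hIr : Integrable (fun y => (b i - a i) * (f (φm i (a i) y) + f (φm i (b i) y)) / 2)
      (volume.restrict (Bset a b i)) := by
    exact ((ha.add hb).const_mul (b i - a i)).div_const 2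
  refine (integral_mono_ae hIl hIr hbd).trans (le_of_eq ?_)
  rw [integral_div, integral_const_mul, integral_add ha hb]

lemma volume_slice (k0 : Fin n) (c' : ℝ) :
    volume {y : EuclideanSpace ℝ (Fin n) | y k0 = c'} = 0 := by
  have hs : {y : EuclideanSpace ℝ (Fin n) | y k0 = c'} =
      (MeasurableEquiv.toLp 2 (Fin n → ℝ)).symm ⁻¹'
        (Set.univ.pi fun k => if k = k0 then ({c'} : Set ℝ) else Set.univ) := by
    ext y
    simp only [Set.mem_setOf_eq, Set.mem_preimage, Set.mem_pi, Set.mem_univ, true_implies]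
    constructor
    · intro h k
      by_cases hk : k = k0
      · subst hk; simp only [if_pos rfl, Set.mem_singleton_iff]; exact h
      · simp [hk]
    · intro h
      have := h k0
      simp only [if_pos rfl, Set.mem_singleton_iff] at this
      exact this
  rw [hs, (EuclideanSpace.volume_preserving_symm_measurableEquiv_toLp (Fin n)).measure_preimage
    ((MeasurableSet.univ_pi fun k => by split <;> exact (by first | exact measurableSet_singleton _ | exact MeasurableSet.univ)).nullMeasurableSet),
    volume_pi_pi]
  refine Finset.prod_eq_zero (Finset.mem_univ k0) ?_
  simp

lemma face_inter_same (a b : Fin (n+1) → ℝ) (i : Fin (n+1)) {c c' : ℝ} (hcc : c ≠ c') :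
    φm i c '' Bset a b i ∩ φm i c' '' Bset a b i = ∅ := by
  ext x
  simp only [Set.mem_inter_iff, Set.mem_image, Set.mem_empty_iff_false, iff_false]
  rintro ⟨⟨y, _, rfl⟩, ⟨z, _, hz⟩⟩
  apply hcc
  have h1 : (φm i c y) i = c := by simp [φm, Fin.insertNth_apply_same]
  have h2 : (φm i c' z) i = c' := by simp [φm, Fin.insertNth_apply_same]
  rw [← h1, ← hz, h2]

lemma face_inter_ne (a b : Fin (n+1) → ℝ) {i j : Fin (n+1)} (hij : i ≠ j) (c c' : ℝ) :
    (μH[(n:ℝ)] : Measure (EuclideanSpace ℝ (Fin (n+1))))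
      (φm i c '' Bset a b i ∩ φm j c' '' Bset a b j) = 0 := by
  obtain ⟨k0, hk0⟩ := Fin.exists_succAbove_eq hij.symm
  have hsub : φm i c '' Bset a b i ∩ φm j c' '' Bset a b j ⊆
      φm i c '' {y | y k0 = c'} := by
    rintro x ⟨⟨y, _, rfl⟩, ⟨z, _, hz⟩⟩
    refine ⟨y, ?_, rfl⟩
    have h1 : (φm i c y) j = y k0 := by
      rw [← hk0]; simp [φm, Fin.insertNth_apply_succAbove]
    have h2 : (φm j c' z) j = c' := by simp [φm, Fin.insertNth_apply_same]
    show y k0 = c'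
    rw [← h1, ← hz, h2]
  refine measure_mono_null hsub ?_
  rw [(φm_isometry i c).hausdorffMeasure_image (Or.inl (Nat.cast_nonneg n))]
  conv_lhs => rw [nu_eq_smul]
  simp [Measure.smul_apply, volume_slice]

end JensenBox

open JensenBox in
/-- Every axis-parallel box in `ℝ^d` is a Jensen domain. -/
theorem box_is_jensen_domain (d : ℕ) (hd : 2 ≤ d) (a b : Fin d → ℝ)
    (hab : ∀ i, a i < b i)
    (Ω : Set (EuclideanSpace ℝ (Fin d)))
    (hΩ : Ω = {x : EuclideanSpace ℝ (Fin d) | ∀ i, x i ∈ Set.Icc (a i) (b i)})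
    (f : EuclideanSpace ℝ (Fin d) → ℝ) (hf : ConvexOn ℝ Ω f)
    (hfint : IntegrableOn f Ω volume)
    (hfbint : IntegrableOn f (frontier Ω) (μH[(d : ℝ) - 1])) :
    (volume Ω).toReal⁻¹ * ∫ x in Ω, f x ≤
      ((μH[(d : ℝ) - 1]) (frontier Ω)).toReal⁻¹ *
        ∫ x in frontier Ω, f x ∂(μH[(d : ℝ) - 1]) := by
  obtain ⟨n, rfl⟩ : ∃ n, d = n + 1 := ⟨d - 1, by omega⟩
  have hd1 : ((n + 1 : ℕ) : ℝ) - 1 = (n : ℝ) := by push_cast; ring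
  rw [hd1] at hfbint ⊢
  have hΩ' : Ω = Ωset a b := hΩ
  rw [hΩ'] at hf hfint hfbint ⊢
  clear hΩ hΩ' hd
  set μ := (μH[(n:ℝ)] : Measure (EuclideanSpace ℝ (Fin (n+1)))) with hμ
  set cT := (Measure.addHaarScalarFactor (μH[(n:ℝ)])
    (volume : Measure (EuclideanSpace ℝ (Fin n))) : ℝ≥0).toReal with hcT
  have hc0 : 0 < cT := scalar_pos
  set S : Fin (n+1) × Bool → Set (EuclideanSpace ℝ (Fin (n+1))) :=
    fun p => φm p.1 (bif p.2 then b p.1 else a p.1) '' Bset a b p.1 with hS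
  have hfront : frontier (Ωset a b) = ⋃ p, S p := by
    rw [frontier_Ω a b hab]
    ext x
    simp only [Set.mem_iUnion, Set.mem_union, hS]
    constructor
    · rintro ⟨i, h | h⟩
      · exact ⟨(i, false), h⟩
      · exact ⟨(i, true), h⟩
    · rintro ⟨⟨i, bo⟩, h⟩
      cases bo
      · exact ⟨i, Or.inl h⟩
      · exact ⟨i, Or.inr h⟩
  have hSmeas : ∀ p, MeasurableSet (S p) :=
    fun p => (φm_me p.1 _).measurableSet_image' (measurable_B a b p.1)
  have hdisj : Pairwise (Function.onFun (MeasureTheory.AEDisjoint μ) S) := by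
    rintro ⟨i, s⟩ ⟨j, t⟩ hne
    show μ (S (i, s) ∩ S (j, t)) = 0
    rcases eq_or_ne i j with rfl | h1
    · have ht : s ≠ t := by
        intro h; exact hne (by rw [h])
      have hcc : (bif s then b i else a i) ≠ (bif t then b i else a i) := by
        cases s <;> cases t
        · exact absurd rfl ht
        · exact (hab i).ne
        · exact (hab i).ne'
        · exact absurd rfl ht
      simp only [hS]
      rw [face_inter_same a b i hcc]
      exact measure_empty
    · exact face_inter_ne a b h1 _ _
  have hvolB_ne : ∀ i, volume (Bset a b i) ≠ ∞ := by
    intro i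
    rw [volume_B]
    exact (ENNReal.prod_lt_top fun k _ => ENNReal.ofReal_lt_top).ne
  have hμS : ∀ p, μ (S p) = ((Measure.addHaarScalarFactor (μH[(n:ℝ)])
      (volume : Measure (EuclideanSpace ℝ (Fin n))) : ℝ≥0) : ℝ≥0∞) * volume (Bset a b p.1) :=
    fun p => face_measure a b p.1 _
  have hμfront : μ (frontier (Ωset a b)) = ∑ p : Fin (n+1) × Bool, μ (S p) := by
    rw [hfront, measure_iUnion₀ hdisj (fun p => (hSmeas p).nullMeasurableSet), tsum_fintype]
  have hint_u : IntegrableOn f (⋃ p, S p) μ := by rw [← hfront]; exact hfbint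
  have hibd : ∫ x in frontier (Ωset a b), f x ∂μ = ∑ p : Fin (n+1) × Bool, ∫ x in S p, f x ∂μ := by
    rw [hfront, integral_iUnion_ae (fun p => (hSmeas p).nullMeasurableSet) hdisj hint_u,
      tsum_fintype]
  have hSsub : ∀ p, S p ⊆ frontier (Ωset a b) := fun p => by
    rw [hfront]; exact Set.subset_iUnion S p
  have hintS : ∀ p, IntegrableOn f (S p) μ := fun p => hfbint.mono_set (hSsub p)
  have hIa : ∀ i, IntegrableOn (fun y => f (φm i (a i) y)) (Bset a b i) volume :=
    fun i => face_integrable a b i (a i) (hintS (i, false))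
  have hIb : ∀ i, IntegrableOn (fun y => f (φm i (b i) y)) (Bset a b i) volume :=
    fun i => face_integrable a b i (b i) (hintS (i, true))
  set sA : Fin (n+1) → ℝ := fun i => ∫ y in Bset a b i, f (φm i (a i) y) with hsA
  set sB : Fin (n+1) → ℝ := fun i => ∫ y in Bset a b i, f (φm i (b i) y) with hsB
  set Lr : Fin (n+1) → ℝ := fun i => ∏ k, (b (i.succAbove k) - a (i.succAbove k)) with hLr
  have hLrpos : ∀ i, 0 < Lr i :=
    fun i => Finset.prod_pos fun k _ => sub_pos.2 (hab _)
  set Vr : ℝ := ∏ j, (b j - a j) with hVrdef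
  have hVrpos : 0 < Vr := Finset.prod_pos fun j _ => sub_pos.2 (hab j)
  have hVL : ∀ i, Vr = (b i - a i) * Lr i :=
    fun i => Fin.prod_univ_succAbove (fun j => b j - a j) i
  have hvolΩ : (volume (Ωset a b)).toReal = Vr := by
    rw [volume_Ω, ENNReal.toReal_prod]
    exact Finset.prod_congr rfl fun j _ => ENNReal.toReal_ofReal (sub_nonneg.2 (hab j).le)
  have hvolB : ∀ i, (volume (Bset a b i)).toReal = Lr i := by
    intro i
    rw [volume_B, ENNReal.toReal_prod]
    exact Finset.prod_congr rfl fun k _ => ENNReal.toReal_ofReal (sub_nonneg.2 (hab _).le)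
  set SL : ℝ := ∑ i, Lr i with hSL
  have hSLpos : 0 < SL := Finset.sum_pos (fun i _ => hLrpos i) Finset.univ_nonempty
  set Ss : ℝ := ∑ i, (sA i + sB i) with hSs
  -- total boundary measure
  have hTot : (μ (frontier (Ωset a b))).toReal = cT * (2 * SL) := by
    rw [hμfront, Finset.sum_congr rfl fun p _ => hμS p,
      ENNReal.toReal_sum (fun p _ => ENNReal.mul_ne_top ENNReal.coe_ne_top (hvolB_ne p.1))]
    calc (∑ p : Fin (n+1) × Bool,
            (((Measure.addHaarScalarFactor (μH[(n:ℝ)])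
              (volume : Measure (EuclideanSpace ℝ (Fin n))) : ℝ≥0) : ℝ≥0∞) *
              volume (Bset a b p.1)).toReal)
        = ∑ p : Fin (n+1) × Bool, cT * Lr p.1 := by
          refine Finset.sum_congr rfl fun p _ => ?_
          rw [ENNReal.toReal_mul, ENNReal.coe_toReal, hvolB p.1]
      _ = ∑ i : Fin (n+1), ∑ s : Bool, cT * Lr i := by rw [Fintype.sum_prod_type]
      _ = ∑ i : Fin (n+1), (cT * Lr i + cT * Lr i) :=
          Finset.sum_congr rfl fun i _ => Fintype.sum_bool _
      _ = cT * (2 * SL) := by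
          rw [hSL, Finset.mul_sum, Finset.mul_sum]
          exact Finset.sum_congr rfl fun i _ => by ring
  -- total boundary integral
  have hIbdtot : (∫ x in frontier (Ωset a b), f x ∂μ) = cT * Ss := by
    rw [hibd]
    have hval : ∀ p : Fin (n+1) × Bool, (∫ x in S p, f x ∂μ) =
        cT * ∫ y in Bset a b p.1, f (φm p.1 (bif p.2 then b p.1 else a p.1) y) :=
      fun p => face_integral a b p.1 _ f
    calc (∑ p : Fin (n+1) × Bool, ∫ x in S p, f x ∂μ)
        = ∑ p : Fin (n+1) × Bool, cT *
            ∫ y in Bset a b p.1, f (φm p.1 (bif p.2 then b p.1 else a p.1) y) :=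
          Finset.sum_congr rfl fun p _ => hval p
      _ = ∑ i : Fin (n+1), ∑ s : Bool, cT *
            ∫ y in Bset a b i, f (φm i (bif s then b i else a i) y) := by
          rw [Fintype.sum_prod_type]
      _ = ∑ i : Fin (n+1), (cT * sB i + cT * sA i) :=
          Finset.sum_congr rfl fun i _ => Fintype.sum_bool _
      _ = cT * Ss := by
          rw [hSs, Finset.mul_sum]
          exact Finset.sum_congr rfl fun i _ => by ring
  rw [hvolΩ, hTot, hIbdtot]
  set I : ℝ := ∫ x in Ωset a b, f x with hI
  have hkey : ∀ i, I ≤ (b i - a i) * (sA i + sB i) / 2 :=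
    fun i => key_ineq a b hab i f hf hfint (hIa i) (hIb i)
  have hSi : ∀ i, 2 * I * Lr i / Vr ≤ sA i + sB i := by
    intro i
    have hbi : 0 < b i - a i := sub_pos.2 (hab i)
    have heq : 2 * I * Lr i / Vr = 2 * I / (b i - a i) := by
      rw [hVL i]
      rw [mul_comm (b i - a i) (Lr i), ← div_div, mul_div_assoc,
        div_self (hLrpos i).ne', mul_one]
    rw [heq, div_le_iff₀ hbi]
    nlinarith [hkey i]
  have hsum : 2 * I / Vr * SL ≤ Ss := by
    rw [hSL, Finset.mul_sum, hSs]
    refine Finset.sum_le_sum fun i _ => ?_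
    calc 2 * I / Vr * Lr i = 2 * I * Lr i / Vr := by ring
      _ ≤ sA i + sB i := hSi i
  have hRHS : (cT * (2 * SL))⁻¹ * (cT * Ss) = Ss / (2 * SL) := by
    rw [mul_inv]
    have : cT⁻¹ * (2 * SL)⁻¹ * (cT * Ss) = (cT⁻¹ * cT) * (Ss / (2 * SL)) := by ring
    rw [this, inv_mul_cancel₀ hc0.ne', one_mul]
  rw [hRHS, inv_mul_eq_div, div_le_div_iff₀ hVrpos (by positivity : (0:ℝ) < 2 * SL)]
  have h2 := mul_le_mul_of_nonneg_right hsum hVrpos.le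
  have hLHS : 2 * I / Vr * SL * Vr = 2 * I * SL := by
    field_simp
  rw [hLHS] at h2
  nlinarith [h2]
end
end
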